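/- arXiv:2007.02805 — 6 statements merged into one kernel-verified Lean document; each statement's English description precedes it below -/
import Mathlib

section
/- Let J be the 2×2 matrix with rows (λ₁-μ-(λ₂-μ)-(τ/C)(λ₂-μ), p(λ₂-μ)) and (σ, -κμ-σ), where λ₂ > μ. If det J ≥ 0, then J has no positive real eigenvalue (i.e., its trace is negative). -/
theorem stmt_8 (lam1 lam2 mu C sigma tau p kappa : ℝ)
    (hmu : 0 < mu) (hC : 0 < C) (hsigma : 0 < sigma) (htau : 0 < tau)
    (hp0 : 0 < p) (hp1 : p < 1) (hkappa : 0 ≤ kappa) (hfit2 : lam2 > mu) :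
    let J : Matrix (Fin 2) (Fin 2) ℝ :=
      !![lam1 - mu - (lam2 - mu) - tau / C * (lam2 - mu), p * (lam2 - mu);
         sigma, -(kappa * mu) - sigma]
    J.det ≥ 0 →
      (J.trace < 0 ∧ ∀ x : ℝ, 0 < x → ¬ (Matrix.charpoly J).IsRoot x) := by
  intro J hdet
  have hdet' : J.det = (lam1 - mu - (lam2 - mu) - tau / C * (lam2 - mu)) * (-(kappa * mu) - sigma)
      - p * (lam2 - mu) * sigma := by
    simp [J, Matrix.det_fin_two]
  have ha : lam1 - mu - (lam2 - mu) - tau / C * (lam2 - mu) < 0 := by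
    rw [hdet'] at hdet
    nlinarith [mul_pos hp0 (sub_pos.mpr hfit2), mul_nonneg hkappa hmu.le]
  have htr : J.trace < 0 := by
    have : J.trace = (lam1 - mu - (lam2 - mu) - tau / C * (lam2 - mu)) + (-(kappa * mu) - sigma) := by
      simp [J, Matrix.trace_fin_two]
    rw [this]
    nlinarith [mul_nonneg hkappa hmu.le]
  refine ⟨htr, fun x hx hroot => ?_⟩
  have heval : (Matrix.charpoly J).eval x = x^2 - J.trace * x + J.det := by
    rw [Matrix.charpoly, Matrix.det_fin_two]
    simp [Matrix.charmatrix_apply, J, Matrix.trace_fin_two, Matrix.det_fin_two]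
    ring
  have := hroot
  rw [Polynomial.IsRoot, heval] at this
  nlinarith [mul_pos (neg_pos.mpr htr) hx, sq_nonneg x]
end

section
/- If either (λ₂-μ) < (Cpσ/(τ(κμ+σ)))(λ₂-μ) + (C/τ)(λ₁-λ₂) < (λ₁-μ) or (λ₂-μ) > (Cpσ/(τ(κμ+σ)))(λ₂-μ) + (C/τ)(λ₁-λ₂) > (λ₁-μ) holds, then the point (n₁ₐ, n₁d, n₂) with n₁ₐ = (C(κμ+σ)(λ₂-λ₁)+Cpσ(μ-λ₂)+(κμ+σ)τ(λ₂-μ))/(τ(Cpσ-(κμ+σ)τ)), n₁d = pC(λ₂-λ₁)·n₁ₐ/(Cpσ-(κμ+σ)τ), and n₂ = (C(κμ+σ)(λ₂-λ₁)+Cpσ(μ-λ₂)+(κμ+σ)τ(λ₁-μ))/(-τ(Cpσ-(κμ+σ)τ)) has all three coordinates strictly positive. -/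
set_option maxHeartbeats 1000000


theorem stmt_9 (lam1 lam2 mu C sigma tau p kappa : ℝ)
    (hmu : 0 < mu) (hC : 0 < C) (hsigma : 0 < sigma) (htau : 0 < tau)
    (hp0 : 0 < p) (hp1 : p < 1) (hkappa : 0 ≤ kappa) (hfit : lam1 > mu)
    (hcond :
      (lam2 - mu <
          C * p * sigma / (tau * (kappa * mu + sigma)) * (lam2 - mu) + C / tau * (lam1 - lam2)
        ∧ C * p * sigma / (tau * (kappa * mu + sigma)) * (lam2 - mu) + C / tau * (lam1 - lam2)
          < lam1 - mu)
      ∨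
      (lam2 - mu >
          C * p * sigma / (tau * (kappa * mu + sigma)) * (lam2 - mu) + C / tau * (lam1 - lam2)
        ∧ C * p * sigma / (tau * (kappa * mu + sigma)) * (lam2 - mu) + C / tau * (lam1 - lam2)
          > lam1 - mu)) :
    let n1a : ℝ := (C * (kappa * mu + sigma) * (lam2 - lam1) + C * p * sigma * (mu - lam2)
        + (kappa * mu + sigma) * tau * (lam2 - mu))
      / (tau * (C * p * sigma - (kappa * mu + sigma) * tau))
    let n1d : ℝ := p * C * (lam2 - lam1) * n1a / (C * p * sigma - (kappa * mu + sigma) * tau)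
    let n2 : ℝ := (C * (kappa * mu + sigma) * (lam2 - lam1) + C * p * sigma * (mu - lam2)
        + (kappa * mu + sigma) * tau * (lam1 - mu))
      / (-(tau * (C * p * sigma - (kappa * mu + sigma) * tau)))
    0 < n1a ∧ 0 < n1d ∧ 0 < n2 := by
  intro n1a n1d n2
  unfold n1a n1d n2
  have hs : (0:ℝ) < kappa * mu + sigma := by positivity
  have hts : (0:ℝ) < tau * (kappa * mu + sigma) := by positivity
  have hE : (C * p * sigma / (tau * (kappa * mu + sigma)) * (lam2 - mu) + C / tau * (lam1 - lam2))
      * (tau * (kappa * mu + sigma))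
      = C * p * sigma * (lam2 - mu) + C * (kappa * mu + sigma) * (lam1 - lam2) := by
    field_simp
  rcases hcond with ⟨h1, h2⟩ | ⟨h1, h2⟩
  · -- case 1 : lam2 < lam1, D < 0
    have h1' : (lam2 - mu) * (tau * (kappa * mu + sigma))
        < C * p * sigma * (lam2 - mu) + C * (kappa * mu + sigma) * (lam1 - lam2) := by
      have := mul_lt_mul_of_pos_right h1 hts
      linarith [this, hE.le, hE.ge]
    have h2' : C * p * sigma * (lam2 - mu) + C * (kappa * mu + sigma) * (lam1 - lam2)
        < (lam1 - mu) * (tau * (kappa * mu + sigma)) := by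
      have := mul_lt_mul_of_pos_right h2 hts
      linarith [this, hE.le, hE.ge]
    have hlt : lam2 < lam1 := by linarith
    have hD : C * p * sigma - (kappa * mu + sigma) * tau < 0 := by
      nlinarith [mul_pos (mul_pos hC (show (0:ℝ) < (kappa * mu + sigma) - p * sigma by nlinarith [mul_nonneg hkappa hmu.le, mul_pos hsigma (sub_pos.mpr hp1)]))
        (show (0:ℝ) < lam1 - lam2 by linarith),
        mul_pos (show (0:ℝ) < lam1 - mu by linarith) htau]
    have hN1 : C * (kappa * mu + sigma) * (lam2 - lam1) + C * p * sigma * (mu - lam2)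
        + (kappa * mu + sigma) * tau * (lam2 - mu) < 0 := by linarith
    have hN2 : 0 < C * (kappa * mu + sigma) * (lam2 - lam1) + C * p * sigma * (mu - lam2)
        + (kappa * mu + sigma) * tau * (lam1 - mu) := by linarith
    have hden : tau * (C * p * sigma - (kappa * mu + sigma) * tau) < 0 :=
      mul_neg_of_pos_of_neg htau hD
    have hn1a : 0 < (C * (kappa * mu + sigma) * (lam2 - lam1) + C * p * sigma * (mu - lam2)
        + (kappa * mu + sigma) * tau * (lam2 - mu))
        / (tau * (C * p * sigma - (kappa * mu + sigma) * tau)) :=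
      div_pos_of_neg_of_neg hN1 hden
    refine ⟨hn1a, ?_, ?_⟩
    · apply div_pos_of_neg_of_neg _ hD
      have : p * C * (lam2 - lam1) < 0 :=
        mul_neg_of_pos_of_neg (mul_pos hp0 hC) (by linarith)
      exact mul_neg_of_neg_of_pos this hn1a
    · exact div_pos hN2 (by linarith)
  · -- case 2 : lam1 < lam2, D > 0
    have h1' : C * p * sigma * (lam2 - mu) + C * (kappa * mu + sigma) * (lam1 - lam2)
        < (lam2 - mu) * (tau * (kappa * mu + sigma)) := by
      have := mul_lt_mul_of_pos_right h1 hts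
      linarith [this, hE.le, hE.ge]
    have h2' : (lam1 - mu) * (tau * (kappa * mu + sigma))
        < C * p * sigma * (lam2 - mu) + C * (kappa * mu + sigma) * (lam1 - lam2) := by
      have := mul_lt_mul_of_pos_right h2 hts
      linarith [this, hE.le, hE.ge]
    have hlt : lam1 < lam2 := by linarith
    have hD : 0 < C * p * sigma - (kappa * mu + sigma) * tau := by
      nlinarith [mul_pos (mul_pos hC (show (0:ℝ) < (kappa * mu + sigma) - p * sigma by nlinarith [mul_nonneg hkappa hmu.le, mul_pos hsigma (sub_pos.mpr hp1)]))
        (show (0:ℝ) < lam2 - lam1 by linarith),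
        mul_pos (show (0:ℝ) < lam1 - mu by linarith) htau]
    have hN1 : 0 < C * (kappa * mu + sigma) * (lam2 - lam1) + C * p * sigma * (mu - lam2)
        + (kappa * mu + sigma) * tau * (lam2 - mu) := by linarith
    have hN2 : C * (kappa * mu + sigma) * (lam2 - lam1) + C * p * sigma * (mu - lam2)
        + (kappa * mu + sigma) * tau * (lam1 - mu) < 0 := by linarith
    have hden : 0 < tau * (C * p * sigma - (kappa * mu + sigma) * tau) := mul_pos htau hD
    have hn1a : 0 < (C * (kappa * mu + sigma) * (lam2 - lam1) + C * p * sigma * (mu - lam2)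
        + (kappa * mu + sigma) * tau * (lam2 - mu))
        / (tau * (C * p * sigma - (kappa * mu + sigma) * tau)) := div_pos hN1 hden
    refine ⟨hn1a, ?_, ?_⟩
    · apply div_pos _ hD
      have : 0 < p * C * (lam2 - lam1) := mul_pos (mul_pos hp0 hC) (by linarith)
      exact mul_pos this hn1a
    · exact div_pos_of_neg_of_neg hN2 (by linarith)
end

section
/- Let (n₁ₐ, n₁d, n₂) be a coordinatewise positive point satisfying: λ₁-μ-C(n₁ₐ+n₂)-τn₂+σ·n₁d/n₁ₐ = 0, pC(n₁ₐ+n₂)-(κμ+σ)·n₁d/n₁ₐ = 0, and λ₂-μ-C(n₁ₐ+n₂)+τn₁ₐ = 0. Then it is the unique such point, and its coordinates are given by the explicit formulas n₁ₐ = (C(κμ+σ)(λ₂-λ₁)+Cpσ(μ-λ₂)+(κμ+σ)τ(λ₂-μ))/(τ(Cpσ-(κμ+σ)τ)), n₁d = pC(λ₂-λ₁)·n₁ₐ/(Cpσ-(κμ+σ)τ), n₂ = (C(κμ+σ)(λ₂-λ₁)+Cpσ(μ-λ₂)+(κμ+σ)τ(λ₁-μ))/(-τ(Cpσ-(κμ+σ)τ)).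 -/
theorem stmt_10 (lam1 lam2 mu C sigma tau p kappa : ℝ)
    (hmu : 0 < mu) (hC : 0 < C) (hsigma : 0 < sigma) (htau : 0 < tau)
    (hp0 : 0 < p) (hp1 : p < 1) (hkappa : 0 ≤ kappa)
    (hne : C * p * sigma ≠ (kappa * mu + sigma) * tau)
    (n1a n1d n2 : ℝ) (hn1a : 0 < n1a) (hn1d : 0 < n1d) (hn2 : 0 < n2)
    (heq1 : lam1 - mu - C * (n1a + n2) - tau * n2 + sigma * n1d / n1a = 0)
    (heq2 : p * C * (n1a + n2) - (kappa * mu + sigma) * n1d / n1a = 0)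
    (heq3 : lam2 - mu - C * (n1a + n2) + tau * n1a = 0) :
    n1a = (C * (kappa * mu + sigma) * (lam2 - lam1) + C * p * sigma * (mu - lam2)
        + (kappa * mu + sigma) * tau * (lam2 - mu))
      / (tau * (C * p * sigma - (kappa * mu + sigma) * tau))
    ∧ n1d = p * C * (lam2 - lam1) * n1a / (C * p * sigma - (kappa * mu + sigma) * tau)
    ∧ n2 = (C * (kappa * mu + sigma) * (lam2 - lam1) + C * p * sigma * (mu - lam2)
        + (kappa * mu + sigma) * tau * (lam1 - mu))
      / (-(tau * (C * p * sigma - (kappa * mu + sigma) * tau))) := by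
  have hA : n1a ≠ 0 := hn1a.ne'
  have hK : (0:ℝ) < kappa * mu + sigma := by positivity
  have hsub : C * p * sigma - (kappa * mu + sigma) * tau ≠ 0 := sub_ne_zero.mpr hne
  have hD : tau * (C * p * sigma - (kappa * mu + sigma) * tau) ≠ 0 :=
    mul_ne_zero htau.ne' hsub
  -- cleared versions of eq1 and eq2
  have h1' : (lam1 - mu - C * (n1a + n2) - tau * n2) * n1a + sigma * n1d = 0 := by
    have := heq1
    field_simp at this
    linarith
  have h2' : p * C * (n1a + n2) * n1a = (kappa * mu + sigma) * n1d := by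
    have := heq2
    field_simp at this
    linarith
  -- eliminate n1d
  have hm : ((lam1 - mu) * (kappa * mu + sigma)
      + (sigma * p * C - C * (kappa * mu + sigma)) * (n1a + n2)
      - tau * (kappa * mu + sigma) * n2) * n1a = 0 := by
    linear_combination (kappa * mu + sigma) * h1' + sigma * h2'
  have hL1 : (lam1 - mu) * (kappa * mu + sigma)
      + (sigma * p * C - C * (kappa * mu + sigma)) * (n1a + n2)
      - tau * (kappa * mu + sigma) * n2 = 0 :=
    (mul_eq_zero.mp hm).resolve_right hA
  set K := kappa * mu + sigma with hKdef
  -- solve linear system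
  have g1 : n1a * (tau * (C * p * sigma - K * tau))
      = C * K * (lam2 - lam1) + C * p * sigma * (mu - lam2) + K * tau * (lam2 - mu) := by
    linear_combination C * hL1 + (sigma * p * C - C * K - tau * K) * heq3
  have g2 : n2 * (-(tau * (C * p * sigma - K * tau)))
      = C * K * (lam2 - lam1) + C * p * sigma * (mu - lam2) + K * tau * (lam1 - mu) := by
    linear_combination (C - tau) * hL1 + (sigma * p * C - C * K) * heq3
  have hS : (n1a + n2) * (tau * (C * p * sigma - K * tau)) = K * tau * (lam2 - lam1) := by
    linear_combination g1 - g2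
  have g3' : K * (n1d * (tau * (C * p * sigma - K * tau)))
      = K * (p * C * (lam2 - lam1) * n1a * tau) := by
    linear_combination p * C * n1a * hS - (tau * (C * p * sigma - K * tau)) * h2'
  have g3'' := mul_left_cancel₀ hK.ne' g3'
  have g3 : n1d * (C * p * sigma - K * tau) = p * C * (lam2 - lam1) * n1a := by
    have := mul_left_cancel₀ htau.ne' (show tau * (n1d * (C * p * sigma - K * tau))
        = tau * (p * C * (lam2 - lam1) * n1a) by linear_combination g3'')
    exact this
  refine ⟨?_, ?_, ?_⟩
  · rw [eq_div_iff hD]; linear_combination g1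
  · rw [eq_div_iff hsub]; linear_combination g3
  · rw [eq_div_iff (neg_ne_zero.mpr hD)]; linear_combination g2
end

section
/- Under the stable-coexistence assumption (λ₂-μ) < (Cpσ/(τ(κμ+σ)))(λ₂-μ) + (C/τ)(λ₁-λ₂) < (λ₁-μ) (with λ₁ > μ), the coexistence equilibrium satisfies n̄₁ₐ > n₁ₐ + n₂ > (λ₂-μ)/C, where n̄₁ₐ = ((λ₁-μ)/C)·((κμ+σ)/(κμ+(1-p)σ)). -/
theorem stmt_16 (lam1 lam2 mu C sigma tau p kappa : ℝ)
    (hmu : 0 < mu) (hC : 0 < C) (hsigma : 0 < sigma) (htau : 0 < tau)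
    (hp0 : 0 < p) (hp1 : p < 1) (hkappa : 0 ≤ kappa) (hfit : lam1 > mu)
    (hcond1 : lam2 - mu <
      C * p * sigma / (tau * (kappa * mu + sigma)) * (lam2 - mu) + C / tau * (lam1 - lam2))
    (hcond2 : C * p * sigma / (tau * (kappa * mu + sigma)) * (lam2 - mu) + C / tau * (lam1 - lam2)
      < lam1 - mu) :
    let n1a : ℝ := (C * (kappa * mu + sigma) * (lam2 - lam1) + C * p * sigma * (mu - lam2)
        + (kappa * mu + sigma) * tau * (lam2 - mu))
      / (tau * (C * p * sigma - (kappa * mu + sigma) * tau))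
    let n2 : ℝ := (C * (kappa * mu + sigma) * (lam2 - lam1) + C * p * sigma * (mu - lam2)
        + (kappa * mu + sigma) * tau * (lam1 - mu))
      / (-(tau * (C * p * sigma - (kappa * mu + sigma) * tau)))
    let n1abar : ℝ := ((lam1 - mu) / C) * ((kappa * mu + sigma) / (kappa * mu + (1 - p) * sigma))
    n1abar > n1a + n2 ∧ n1a + n2 > (lam2 - mu) / C := by
  intro n1a n2 n1abar
  have hK : 0 < kappa * mu + sigma := by positivity
  have hKp : 0 < kappa * mu + (1 - p) * sigma := by nlinarith
  have hlam : lam2 < lam1 := by linarith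
  have htK : (0:ℝ) < tau * (kappa * mu + sigma) := by positivity
  have e : C * p * sigma / (tau * (kappa * mu + sigma)) * (lam2 - mu) + C / tau * (lam1 - lam2)
      = (C * p * sigma * (lam2 - mu) + C * (kappa * mu + sigma) * (lam1 - lam2))
        / (tau * (kappa * mu + sigma)) := by
    field_simp
  rw [e, lt_div_iff₀ htK] at hcond1
  rw [e, div_lt_iff₀ htK] at hcond2
  have h1 := hcond1
  have h2 := hcond2
  -- key: (lam1-mu)*(τK - Cpσ) > C*(lam1-lam2)*(K - pσ)
  have hkey : C * (lam1 - lam2) * (kappa * mu + (1 - p) * sigma) <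
      (lam1 - mu) * (tau * (kappa * mu + sigma) - C * p * sigma) := by nlinarith
  have hD : 0 < tau * (kappa * mu + sigma) - C * p * sigma := by
    nlinarith [mul_pos (mul_pos hC (sub_pos.mpr hlam)) hKp]
  have hD' : tau * (C * p * sigma - (kappa * mu + sigma) * tau) ≠ 0 := by nlinarith
  have hS : n1a + n2 = (lam1 - lam2) * (kappa * mu + sigma)
      / (tau * (kappa * mu + sigma) - C * p * sigma) := by
    show _ / _ + _ / _ = _
    rw [div_add_div _ _ hD' (neg_ne_zero.mpr hD'), div_eq_div_iff (mul_ne_zero hD' (neg_ne_zero.mpr hD')) (ne_of_gt hD)]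
    ring
  constructor
  · rw [hS]
    show _ / _ * (_ / _) > _
    rw [div_mul_div_comm, gt_iff_lt, div_lt_div_iff₀ hD (by positivity)]
    nlinarith [hkey]
  · rw [hS]
    rw [gt_iff_lt, div_lt_div_iff₀ hC hD]
    nlinarith [h1]
end

section
/- Let A be the 3×3 Jacobi matrix at the coexistence equilibrium, A = [[-C·n₁ₐ - σ·n₁d/n₁ₐ, σ, -(C+τ)·n₁ₐ], [2pC·n₁ₐ + pC·n₂, -κμ-σ, pC·n₁ₐ], [(-C+τ)·n₂, 0, -C·n₂]], where (n₁ₐ, n₁d, n₂) satisfies pC(n₁ₐ+n₂) = (κμ+σ)·n₁d/n₁ₐ. Then det A = τ·n₁ₐ·n₂·(Cpσ - (κμ+σ)τ). -/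
theorem stmt_17 (mu C sigma tau p kappa n1a n1d n2 : ℝ)
    (hmu : 0 < mu) (hC : 0 < C) (hsigma : 0 < sigma) (htau : 0 < tau)
    (hp0 : 0 < p) (hp1 : p < 1) (hkappa : 0 ≤ kappa)
    (hn1a : 0 < n1a) (hn1d : 0 < n1d) (hn2 : 0 < n2)
    (heq2 : p * C * (n1a + n2) - (kappa * mu + sigma) * n1d / n1a = 0) :
    let A : Matrix (Fin 3) (Fin 3) ℝ :=
      !![-(C * n1a) - sigma * n1d / n1a, sigma, -(C + tau) * n1a;
         2 * p * C * n1a + p * C * n2, -(kappa * mu) - sigma, p * C * n1a;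
         (-C + tau) * n2, 0, -(C * n2)]
    A.det = tau * n1a * n2 * (C * p * sigma - (kappa * mu + sigma) * tau) := by
  intro A
  have hn1a' : n1a ≠ 0 := ne_of_gt hn1a
  have key : (kappa * mu + sigma) * n1d = p * C * (n1a + n2) * n1a := by
    field_simp at heq2
    linarith
  simp only [A, Matrix.det_fin_three, Matrix.of_apply, Matrix.cons_val', Matrix.cons_val_zero,
    Matrix.cons_val_one, Matrix.head_cons, Matrix.empty_val',
    Matrix.cons_val_fin_one, Matrix.head_fin_const, Matrix.cons_val_two,
    Matrix.tail_cons]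
  field_simp
  linear_combination (-(C * n2 * sigma)) * key
end

section
/- Under the founder-control condition (λ₂-μ) > (Cpσ/(τ(κμ+σ)))(λ₂-μ) + (C/τ)(λ₁-λ₂) > (λ₁-μ) with λ₁ > μ, the Jacobi matrix A at the coexistence equilibrium (as above) has positive determinant and negative trace; consequently A has at least one eigenvalue with positive real part and at least one with negative real part, so the coexistence equilibrium is unstable. -/
theorem stmt_18 (lam1 lam2 mu C sigma tau p kappa : ℝ)
    (hmu : 0 < mu) (hC : 0 < C) (hsigma : 0 < sigma) (htau : 0 < tau)
    (hp0 : 0 < p) (hp1 : p < 1) (hkappa : 0 ≤ kappa) (hfit : lam1 > mu)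
    (hcond1 : lam2 - mu >
      C * p * sigma / (tau * (kappa * mu + sigma)) * (lam2 - mu) + C / tau * (lam1 - lam2))
    (hcond2 : C * p * sigma / (tau * (kappa * mu + sigma)) * (lam2 - mu) + C / tau * (lam1 - lam2)
      > lam1 - mu) :
    let n1a : ℝ := (C * (kappa * mu + sigma) * (lam2 - lam1) + C * p * sigma * (mu - lam2)
        + (kappa * mu + sigma) * tau * (lam2 - mu))
      / (tau * (C * p * sigma - (kappa * mu + sigma) * tau))
    let n1d : ℝ := p * C * (lam2 - lam1) * n1a / (C * p * sigma - (kappa * mu + sigma) * tau)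
    let n2 : ℝ := (C * (kappa * mu + sigma) * (lam2 - lam1) + C * p * sigma * (mu - lam2)
        + (kappa * mu + sigma) * tau * (lam1 - mu))
      / (-(tau * (C * p * sigma - (kappa * mu + sigma) * tau)))
    let A : Matrix (Fin 3) (Fin 3) ℝ :=
      !![-(C * n1a) - sigma * n1d / n1a, sigma, -(C + tau) * n1a;
         2 * p * C * n1a + p * C * n2, -(kappa * mu) - sigma, p * C * n1a;
         (-C + tau) * n2, 0, -(C * n2)]
    0 < A.det ∧ A.trace < 0 ∧
      (∃ z : ℂ, (Matrix.charpoly (A.map (Complex.ofReal))).IsRoot z ∧ 0 < z.re) ∧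
      (∃ z : ℂ, (Matrix.charpoly (A.map (Complex.ofReal))).IsRoot z ∧ z.re < 0) := by
  intro n1a n1d n2 A
  have hDpos : 0 < kappa * mu + sigma := by positivity
  have htD : 0 < tau * (kappa * mu + sigma) := mul_pos htau hDpos
  have hcomb : C * p * sigma / (tau * (kappa * mu + sigma)) * (lam2 - mu) + C / tau * (lam1 - lam2)
      = (C * p * sigma * (lam2 - mu) + C * (kappa * mu + sigma) * (lam1 - lam2))
        / (tau * (kappa * mu + sigma)) := by
    field_simp
  rw [hcomb] at hcond1 hcond2
  rw [gt_iff_lt, div_lt_iff₀ htD] at hcond1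
  rw [gt_iff_lt, lt_div_iff₀ htD] at hcond2
  have hlam : lam1 < lam2 := by nlinarith
  -- the key sign condition C p σ > (κ μ + σ) τ
  have hE : 0 < C * p * sigma - (kappa * mu + sigma) * tau := by
    by_contra h
    push_neg at h
    nlinarith [mul_nonneg (sub_nonneg.2 h) (sub_pos.2 hfit).le,
      mul_pos (mul_pos hC
        (by nlinarith [mul_nonneg hkappa hmu.le] :
          (0:ℝ) < kappa * mu + sigma - p * sigma)) (sub_pos.2 hlam)]
  have htE : 0 < tau * (C * p * sigma - (kappa * mu + sigma) * tau) := mul_pos htau hE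
  have hv1 : n1a = (C * (kappa * mu + sigma) * (lam2 - lam1) + C * p * sigma * (mu - lam2)
        + (kappa * mu + sigma) * tau * (lam2 - mu))
      / (tau * (C * p * sigma - (kappa * mu + sigma) * tau)) := rfl
  have hv2 : n2 = (C * (kappa * mu + sigma) * (lam2 - lam1) + C * p * sigma * (mu - lam2)
        + (kappa * mu + sigma) * tau * (lam1 - mu))
      / (-(tau * (C * p * sigma - (kappa * mu + sigma) * tau))) := rfl
  have hN1 : 0 < C * (kappa * mu + sigma) * (lam2 - lam1) + C * p * sigma * (mu - lam2)
      + (kappa * mu + sigma) * tau * (lam2 - mu) := by nlinarith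
  have hN2 : C * (kappa * mu + sigma) * (lam2 - lam1) + C * p * sigma * (mu - lam2)
      + (kappa * mu + sigma) * tau * (lam1 - mu) < 0 := by nlinarith
  have hn1a : 0 < n1a := by rw [hv1]; exact div_pos hN1 htE
  have hn2 : 0 < n2 := by rw [hv2]; exact div_pos_of_neg_of_neg hN2 (neg_neg_of_pos htE)
  have hn1d : 0 < n1d := by
    show 0 < p * C * (lam2 - lam1) * n1a / (C * p * sigma - (kappa * mu + sigma) * tau)
    exact div_pos (mul_pos (mul_pos (mul_pos hp0 hC) (sub_pos.2 hlam)) hn1a) hE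
  have hratio : sigma * n1d / n1a
      = sigma * (p * C * (lam2 - lam1)) / (C * p * sigma - (kappa * mu + sigma) * tau) := by
    show sigma * (p * C * (lam2 - lam1) * n1a
        / (C * p * sigma - (kappa * mu + sigma) * tau)) / n1a = _
    field_simp
  -- determinant
  have hA : A.det = (-(C * n1a) - sigma * n1d / n1a)
        * ((-(kappa * mu) - sigma) * (-(C * n2)) - p * C * n1a * 0)
      - sigma * ((2 * p * C * n1a + p * C * n2) * (-(C * n2))
        - p * C * n1a * ((-C + tau) * n2))
      + (-(C + tau) * n1a) * ((2 * p * C * n1a + p * C * n2) * 0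
        - (-(kappa * mu) - sigma) * ((-C + tau) * n2)) := by
    show (!![-(C * n1a) - sigma * n1d / n1a, sigma, -(C + tau) * n1a;
         2 * p * C * n1a + p * C * n2, -(kappa * mu) - sigma, p * C * n1a;
         (-C + tau) * n2, 0, -(C * n2)] : Matrix (Fin 3) (Fin 3) ℝ).det = _
    rw [Matrix.det_fin_three]
    simp [Matrix.cons_val_zero, Matrix.cons_val_one]
    ring
  have hsum : n1a + n2 = (kappa * mu + sigma) * (lam2 - lam1)
      / (C * p * sigma - (kappa * mu + sigma) * tau) := by
    rw [hv1, hv2]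
    field_simp
    ring
  have hdet : A.det = tau * n1a * n2 * (C * p * sigma - (kappa * mu + sigma) * tau) := by
    rw [hA, hratio]
    linear_combination (sigma * p * C * C * n2) * hsum
  have hdetpos : 0 < A.det := by
    rw [hdet]; positivity
  -- trace
  have htr : A.trace < 0 := by
    have : A.trace = (-(C * n1a) - sigma * n1d / n1a) + (-(kappa * mu) - sigma) + -(C * n2) := by
      show (!![-(C * n1a) - sigma * n1d / n1a, sigma, -(C + tau) * n1a;
         2 * p * C * n1a + p * C * n2, -(kappa * mu) - sigma, p * C * n1a;
         (-C + tau) * n2, 0, -(C * n2)] : Matrix (Fin 3) (Fin 3) ℝ).trace = _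
      rw [Matrix.trace_fin_three]
      simp
    rw [this]
    have h1 : 0 < sigma * n1d / n1a := by positivity
    have h2 : 0 < C * n1a := by positivity
    have h3 : 0 < C * n2 := by positivity
    have h4 : 0 ≤ kappa * mu := mul_nonneg hkappa hmu.le
    linarith
  -- characteristic polynomial over ℂ
  have hcp : (A.map Complex.ofReal).charpoly = (Matrix.charpoly A).map (algebraMap ℝ ℂ) := by
    rw [← Matrix.charpoly_map A (algebraMap ℝ ℂ)]
    norm_cast
  have hmon : (Matrix.charpoly A).Monic := Matrix.charpoly_monic A
  have hnd : (Matrix.charpoly A).natDegree = 3 := by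
    rw [Matrix.charpoly_natDegree_eq_dim, Fintype.card_fin]
  have heval0 : (Matrix.charpoly A).eval 0 < 0 := by
    rw [← Polynomial.coeff_zero_eq_eval_zero]
    have h := Matrix.det_eq_sign_charpoly_coeff A
    rw [Fintype.card_fin] at h
    have h' : (Matrix.charpoly A).coeff 0 = -A.det := by rw [h]; ring
    rw [h']
    linarith
  -- positive real eigenvalue via IVT
  have hdegpos : 0 < (Matrix.charpoly A).degree := by
    rw [Polynomial.degree_eq_natDegree hmon.ne_zero, hnd]
    norm_num
  have htend := Polynomial.tendsto_atTop_of_leadingCoeff_nonneg (Matrix.charpoly A) hdegpos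
    (by rw [hmon.leadingCoeff]; norm_num)
  obtain ⟨b, hb1, hb2⟩ := ((htend.eventually_gt_atTop 0).and (Filter.eventually_gt_atTop 0)).exists
  have hIcc : (0:ℝ) ∈ Set.Icc ((Matrix.charpoly A).eval 0) ((Matrix.charpoly A).eval b) :=
    ⟨heval0.le, hb1.le⟩
  obtain ⟨c, hc, hc0⟩ := intermediate_value_Icc hb2.le
    ((Matrix.charpoly A).continuous_aeval.continuousOn) hIcc
  have hcpos : 0 < c := by
    rcases hc.1.lt_or_eq with h | h
    · exact h
    · exfalso; rw [← h] at hc0; exact heval0.ne hc0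
  have hpos_root : ∃ z : ℂ, (Matrix.charpoly (A.map Complex.ofReal)).IsRoot z ∧ 0 < z.re := by
    refine ⟨(c : ℂ), ?_, by simpa using hcpos⟩
    rw [hcp]
    have : (Matrix.charpoly A).IsRoot c := hc0
    simpa using this.map (f := algebraMap ℝ ℂ)
  -- negative real part eigenvalue from negative trace
  have hneg_root : ∃ z : ℂ, (Matrix.charpoly (A.map Complex.ofReal)).IsRoot z ∧ z.re < 0 := by
    by_contra hcon
    push_neg at hcon
    have htrB : (A.map Complex.ofReal).trace = (A.trace : ℂ) := by
      simp [Matrix.trace, Matrix.diag, Matrix.map_apply]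
    have hsumroots := Matrix.trace_eq_sum_roots_charpoly (A.map Complex.ofReal)
    have hre : (A.trace : ℝ)
        = (((Matrix.charpoly (A.map Complex.ofReal)).roots).map Complex.re).sum := by
      have := congrArg Complex.re (htrB.symm.trans hsumroots)
      rw [Complex.ofReal_re] at this
      rw [this]
      simpa using
        (map_multiset_sum Complex.reAddGroupHom ((Matrix.charpoly (A.map Complex.ofReal)).roots))
    have hge : 0 ≤ ((((Matrix.charpoly (A.map Complex.ofReal)).roots).map Complex.re)).sum := by
      refine Multiset.sum_nonneg ?_
      intro x hx
      obtain ⟨z, hz, rfl⟩ := Multiset.mem_map.mp hx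
      exact hcon z (Polynomial.isRoot_of_mem_roots hz)
    rw [← hre] at hge
    exact absurd hge (not_le.mpr htr)
  exact ⟨hdetpos, htr, hpos_root, hneg_root⟩
end
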